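/- If W is an L_n-injective R-module (i.e. Ext^1_R(M,W)=0 for all modules M of flat dimension ≤ n), then Ext^k_R(M,W)=0 for every module M with flat dimension ≤ n and every integer k ≥ 1. -/

import Mathlib

open CategoryTheory

/-- Flatness of a module over an arbitrary (possibly noncommutative) ring,
via the equational criterion: every relation is a consequence of trivial relations. -/
def IsFlatMod (R : Type) [Ring R] (M : Type) [AddCommGroup M] [Module R M] : Prop :=
  ∀ (ι : Type) (_ : Fintype ι) (r : ι → R) (x : ι → M),
    (∑ i, r i • x i = 0) →
      ∃ (κ : Type) (_ : Fintype κ) (a : ι → κ → R) (y : κ → M),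
        (∀ i, x i = ∑ j, a i j • y j) ∧ ∀ j, (∑ i, r i * a i j) = 0

variable (R : Type) [Ring R]

/-- `Ext^n_R(M, N) = 0`. -/
def extVanish (n : ℕ) (M N : ModuleCat.{0} R) : Prop :=
  Subsingleton (((Ext ℤ (ModuleCat.{0} R) n).obj (Opposite.op M)).obj N)

/-- `M` has flat dimension at most `n`. -/
def fdLE : ℕ → ModuleCat.{0} R → Prop
  | 0, M => IsFlatMod R M
  | n+1, M => ∃ (K F : ModuleCat.{0} R) (f : K ⟶ F) (g : F ⟶ M),
      IsFlatMod R F ∧ Function.Injective f ∧ Function.Surjective g ∧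
        Function.Exact f g ∧ fdLE n K

/-- `W` is `L_n`-injective: `Ext^1_R(M, W) = 0` for every `M` of flat dimension at most `n`. -/
def LnInj (n : ℕ) (W : ModuleCat.{0} R) : Prop :=
  ∀ M : ModuleCat.{0} R, fdLE R n M → extVanish R 1 M W

section Aux
variable {R : Type} [Ring R]

section Flat
variable {A B M K Y : Type} [AddCommGroup A] [Module R A] [AddCommGroup B] [Module R B]
  [AddCommGroup M] [Module R M] [AddCommGroup K] [Module R K] [AddCommGroup Y] [Module R Y]

theorem isFlatMod_of_subsingleton [Subsingleton A] : IsFlatMod R A := by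
  intro ι _ r x _
  refine ⟨Empty, inferInstance, fun i j => j.elim, fun j => j.elim, fun i => ?_, fun j => j.elim⟩
  simp [Subsingleton.elim (x i) 0]

theorem isFlatMod_free (α : Type) : IsFlatMod R (α →₀ R) := by
  classical
  intro ι _ r x hx
  refine ⟨↥(Finset.univ.biUnion fun i => (x i).support), inferInstance,
    fun i j => x i j.1, fun j => Finsupp.single j.1 1, fun i => ?_, fun j => ?_⟩
  · set s := Finset.univ.biUnion fun i => (x i).support with hs
    have hsub : (x i).support ⊆ s := fun b hb => Finset.mem_biUnion.2 ⟨i, Finset.mem_univ _, hb⟩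
    rw [Finset.univ_eq_attach, Finset.sum_attach s (fun b => x i b • Finsupp.single b (1:R))]
    ext b
    rw [Finsupp.finset_sum_apply]
    simp only [Finsupp.smul_apply, Finsupp.single_apply, smul_eq_mul, mul_ite, mul_one, mul_zero]
    rw [Finset.sum_ite_eq' s b (x i)]
    by_cases hb : b ∈ s
    · simp [hb]
    · simp only [hb, if_false]
      exact Finsupp.notMem_support_iff.1 fun h => hb (hsub h)
  · have := congrArg (fun u : α →₀ R => u j.1) hx
    simpa [Finsupp.finset_sum_apply, Finsupp.smul_apply, smul_eq_mul] using this

theorem isFlatMod_prod (hA : IsFlatMod R A) (hB : IsFlatMod R B) : IsFlatMod R (A × B) := by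
  intro ι _ r x hx
  obtain ⟨κ₁, _, a₁, y₁, h₁, h₁'⟩ := hA ι ‹_› r (fun i => (x i).1)
    (by simpa [Prod.fst_sum] using congrArg Prod.fst hx)
  obtain ⟨κ₂, _, a₂, y₂, h₂, h₂'⟩ := hB ι ‹_› r (fun i => (x i).2)
    (by simpa [Prod.snd_sum] using congrArg Prod.snd hx)
  refine ⟨κ₁ ⊕ κ₂, inferInstance, fun i => Sum.elim (a₁ i) (a₂ i),
    Sum.elim (fun j => (y₁ j, 0)) (fun j => (0, y₂ j)), fun i => ?_, fun j => ?_⟩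
  · rw [Fintype.sum_sum_type]
    refine Prod.ext ?_ ?_ <;>
      simp [Prod.fst_sum, Prod.snd_sum, h₁ i, h₂ i]
  · cases j with
    | inl j => simpa using h₁' j
    | inr j => simpa using h₂' j

end Flat

section Crit
variable {M K Y : Type} [AddCommGroup M] [Module R M] [AddCommGroup K] [Module R K]
  [AddCommGroup Y] [Module R Y]

theorem swap_smul {κ κ' : Type} [Fintype κ] [Fintype κ'] (a : κ → R) (b : κ → κ' → R)
    (u : κ' → Y) :
    ∑ j, a j • (∑ l, b j l • u l) = ∑ l, (∑ j, a j * b j l) • u l := by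
  simp only [Finset.smul_sum, Finset.sum_smul, smul_smul]
  exact Finset.sum_comm

theorem swap_mul {κ κ' : Type} [Fintype κ] [Fintype κ'] (a : κ → R) (b : κ → κ' → R)
    (u : κ' → R) :
    ∑ j, a j * (∑ l, b j l * u l) = ∑ l, (∑ j, a j * b j l) * u l := by
  simp only [Finset.mul_sum, Finset.sum_mul, mul_assoc]
  exact Finset.sum_comm

theorem matrixCrit (hM : IsFlatMod R M) (n : ℕ) :
    ∀ (κ : Type) (_ : Fintype κ) (a : Fin n → κ → R) (m : κ → M),
    (∀ i, ∑ j, a i j • m j = 0) →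
      ∃ (κ' : Type) (_ : Fintype κ') (b : κ → κ' → R) (z : κ' → M),
        (∀ j, m j = ∑ l, b j l • z l) ∧ ∀ i l, ∑ j, a i j * b j l = 0 := by
  classical
  induction n with
  | zero =>
    intro κ _ a m _
    refine ⟨κ, ‹_›, fun j l => if j = l then 1 else 0, m, fun j => ?_, fun i => i.elim0⟩
    simp [ite_smul]
  | succ n ih =>
    intro κ _ a m hrel
    obtain ⟨κ₀, _, c, z', hc1, hc2⟩ := hM κ ‹_› (a 0) m (hrel 0)
    have hrel' : ∀ i : Fin n, ∑ l, (∑ j, a i.succ j * c j l) • z' l = 0 := by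
      intro i
      rw [← swap_smul]
      calc ∑ j, a i.succ j • (∑ l, c j l • z' l)
          = ∑ j, a i.succ j • m j := by
            exact Finset.sum_congr rfl fun j _ => by rw [← hc1 j]
        _ = 0 := hrel i.succ
    obtain ⟨κ', _, d, z, hd1, hd2⟩ := ih κ₀ ‹_› (fun i l => ∑ j, a i.succ j * c j l) z' hrel'
    refine ⟨κ', ‹_›, fun j t => ∑ l, c j l * d l t, z, fun j => ?_, fun i t => ?_⟩
    · calc m j = ∑ l, c j l • z' l := hc1 j
        _ = ∑ l, c j l • (∑ t, d l t • z t) :=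
            Finset.sum_congr rfl fun l _ => by rw [← hd1 l]
        _ = ∑ t, (∑ l, c j l * d l t) • z t := swap_smul _ _ _
    · rw [swap_mul]
      refine Fin.cases ?_ (fun i' => ?_) i
      · calc ∑ l, (∑ j, a 0 j * c j l) * d l t
            = ∑ l, (0 : R) * d l t :=
              Finset.sum_congr rfl fun l _ => by rw [hc2 l]
          _ = 0 := by simp
      · exact hd2 i' t

theorem flat_ker (f : K →ₗ[R] Y) (g : Y →ₗ[R] M) (hf : Function.Injective f)
    (hg : Function.Surjective g) (he : Function.Exact f g)
    (hY : IsFlatMod R Y) (hM : IsFlatMod R M) : IsFlatMod R K := by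
  classical
  intro ι _ r k hrel
  have h1 : ∑ i, r i • f (k i) = 0 := by
    have := congrArg f hrel
    simpa [map_sum, map_smul] using this
  obtain ⟨κ, _, a, y, ha1, ha2⟩ := hY ι ‹_› r (fun i => f (k i)) h1
  let e := (Fintype.equivFin ι).symm
  have hrelM : ∀ i : Fin (Fintype.card ι), ∑ j, a (e i) j • g (y j) = 0 := by
    intro i
    calc ∑ j, a (e i) j • g (y j) = g (∑ j, a (e i) j • y j) := by
          rw [map_sum]; exact Finset.sum_congr rfl fun j _ => by rw [map_smul]
      _ = g (f (k (e i))) := by rw [← ha1]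
      _ = 0 := he.apply_apply_eq_zero _
  obtain ⟨κ', _, b, z, hb1, hb2⟩ := matrixCrit hM (Fintype.card ι) κ ‹_›
    (fun i => a (e i)) (fun j => g (y j)) hrelM
  have hb2' : ∀ i l, ∑ j, a i j * b j l = 0 := fun i l => by
    simpa [e] using hb2 ((Fintype.equivFin ι) i) l
  choose w hw using hg
  set y' : κ → Y := fun j => y j - ∑ l, b j l • w (z l) with hy'
  have hgy' : ∀ j, g (y' j) = 0 := by
    intro j
    have : g (∑ l, b j l • w (z l)) = ∑ l, b j l • z l := by
      rw [map_sum]; exact Finset.sum_congr rfl fun l _ => by rw [map_smul, hw]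
    simp [hy', map_sub, this, ← hb1 j]
  have hk' : ∀ j, ∃ k', f k' = y' j := fun j => (he (y' j)).mp (hgy' j)
  choose k' hk'' using hk'
  refine ⟨κ, ‹_›, a, k', fun i => hf ?_, ha2⟩
  have : f (∑ j, a i j • k' j) = ∑ j, a i j • y' j := by
    rw [map_sum]; exact Finset.sum_congr rfl fun j _ => by rw [map_smul, hk'']
  rw [this]
  calc f (k i) = ∑ j, a i j • y j := ha1 i
    _ = ∑ j, a i j • y' j := by
        have h := swap_smul (a i) b (fun l => w (z l))
        simp only [hy', smul_sub, Finset.sum_sub_distrib, h, hb2']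
        simp
end Crit

noncomputable section FdLE
variable {R : Type} [Ring R]

abbrev FreeM (N : ModuleCat.{0} R) : ModuleCat.{0} R := ModuleCat.of R (↑N →₀ R)

def piM (N : ModuleCat.{0} R) : FreeM N ⟶ N :=
  ModuleCat.ofHom (Finsupp.linearCombination R id)

lemma piM_single (N : ModuleCat.{0} R) (b : ↑N) : piM N (Finsupp.single b 1) = b := by
  show (Finsupp.linearCombination R id) (Finsupp.single b 1) = b
  rw [Finsupp.linearCombination_single, one_smul, id]

lemma piM_surj (N : ModuleCat.{0} R) : Function.Surjective (piM N) :=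
  fun n => ⟨Finsupp.single n 1, piM_single N n⟩

lemma freeM_flat (N : ModuleCat.{0} R) : IsFlatMod R (FreeM N) := isFlatMod_free _

def KerM (N : ModuleCat.{0} R) : ModuleCat.{0} R :=
  ModuleCat.of R (LinearMap.ker (piM N).hom)

def incM (N : ModuleCat.{0} R) : KerM N ⟶ FreeM N :=
  ModuleCat.ofHom (LinearMap.ker (piM N).hom).subtype

lemma incM_inj (N : ModuleCat.{0} R) : Function.Injective (incM N) :=
  Subtype.val_injective

lemma exact_incM (N : ModuleCat.{0} R) : Function.Exact (incM N) (piM N) := by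
  intro u
  constructor
  · intro hu
    exact ⟨(⟨u, hu⟩ : LinearMap.ker (piM N).hom), rfl⟩
  · rintro ⟨(⟨v, hv⟩ : LinearMap.ker (piM N).hom), rfl⟩
    exact hv

theorem fdLE_mono : ∀ (n : ℕ) {M : ModuleCat.{0} R}, fdLE R n M → fdLE R (n+1) M := by
  intro n
  induction n with
  | zero =>
    intro M h
    refine ⟨ModuleCat.of R PUnit, M, 0, 𝟙 M, h, ?_, fun m => ⟨m, rfl⟩, ?_,
      isFlatMod_of_subsingleton⟩
    · intro a b _
      exact Subsingleton.elim a b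
    · intro y
      constructor
      · intro hy
        exact ⟨PUnit.unit, by simpa using hy.symm⟩
      · rintro ⟨x, rfl⟩
        rfl
  | succ n ih =>
    rintro M ⟨K, F, f, g, hF, hfi, hgs, hex, hK⟩
    exact ⟨K, F, f, g, hF, hfi, hgs, hex, ih hK⟩

theorem fdLE_step : ∀ (n : ℕ) {K Y F : ModuleCat.{0} R} (f : K ⟶ Y) (g : Y ⟶ F),
    Function.Injective f → Function.Surjective g → Function.Exact f g →
    IsFlatMod R F → fdLE R n Y → fdLE R n K := by
  intro n
  induction n with
  | zero =>
    intro K Y F f g hfi hgs hex hF hY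
    exact flat_ker (f).hom (g).hom hfi hgs hex hY hF
  | succ s ih =>
    rintro K Y F f g hfi hgs hex hF ⟨L, G, fL, φ, hG, hfL, hφ, hexL, hLs⟩
    have hGY : ∀ w : ↑L, (φ).hom (fL w) = 0 := fun w => hexL.apply_apply_eq_zero w
    -- pullback of φ : G ⟶ Y and f : K ⟶ Y
    let Xsub : Submodule R (↑G × ↑K) :=
      LinearMap.ker ((φ).hom.comp (LinearMap.fst R ↑G ↑K) -
        (f).hom.comp (LinearMap.snd R ↑G ↑K))
    have memX : ∀ p : ↑G × ↑K, p ∈ Xsub ↔ φ p.1 = f p.2 := by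
      intro p
      rw [LinearMap.mem_ker, LinearMap.sub_apply, sub_eq_zero]
      rfl
    let X : ModuleCat.{0} R := ModuleCat.of R ↥Xsub
    let jL : ↑L →ₗ[R] ↥Xsub :=
      LinearMap.codRestrict Xsub ((LinearMap.inl R ↑G ↑K).comp (fL).hom)
        (fun w => by rw [memX]; simpa using hGY w)
    let q : ↥Xsub →ₗ[R] ↑K := (LinearMap.snd R ↑G ↑K).comp Xsub.subtype
    -- X is flat, via 0 → X → G → F → 0
    have hXflat : IsFlatMod R ↥Xsub := by
      refine flat_ker ((LinearMap.fst R ↑G ↑K).comp Xsub.subtype)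
        ((g).hom.comp (φ).hom) ?_ ?_ ?_ hG hF
      · rintro ⟨⟨a₁, k₁⟩, h₁⟩ ⟨⟨a₂, k₂⟩, h₂⟩ h
        have ha : a₁ = a₂ := h
        subst ha
        have : f k₁ = f k₂ := by
          rw [← (memX _).mp h₁, ← (memX _).mp h₂]
        have := hfi this
        simp [this]
      · intro c
        obtain ⟨y, rfl⟩ := hgs c
        obtain ⟨aa, rfl⟩ := hφ y
        exact ⟨aa, rfl⟩
      · intro a
        constructor
        · intro ha
          have : φ a ∈ Set.range f := (hex (φ a)).mp ha
          obtain ⟨kk, hkk⟩ := this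
          exact ⟨⟨(a, kk), (memX _).mpr hkk.symm⟩, rfl⟩
        · rintro ⟨⟨⟨aa, kk⟩, hp⟩, rfl⟩
          show g (φ aa) = 0
          rw [(memX _).mp hp]
          exact hex.apply_apply_eq_zero kk
    refine ⟨L, X, ModuleCat.ofHom jL, ModuleCat.ofHom q, hXflat, ?_, ?_, ?_, hLs⟩
    · intro w₁ w₂ h
      have : fL w₁ = fL w₂ := congrArg (Prod.fst ∘ Subtype.val) h
      exact hfL this
    · intro k
      obtain ⟨a, ha⟩ := hφ (f k)
      exact ⟨⟨(a, k), (memX _).mpr ha⟩, rfl⟩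
    · intro x
      constructor
      · intro hx
        obtain ⟨⟨a, k⟩, hp⟩ := x
        have hk : k = 0 := hx
        subst hk
        have : φ a = 0 := by simpa using (memX _).mp hp
        obtain ⟨w, hw⟩ := (hexL a).mp this
        refine ⟨w, ?_⟩
        apply Subtype.ext
        show (fL w, 0) = (a, 0)
        rw [hw]
      · rintro ⟨w, rfl⟩
        rfl

end FdLE

noncomputable section KeyLemma
variable {R : Type} [Ring R]

theorem fdLE_ker : ∀ (n : ℕ) (N : ModuleCat.{0} R), fdLE R n N → fdLE R n (KerM N) := by
  intro n
  cases n with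
  | zero =>
    intro N hN
    exact flat_ker (incM N).hom (piM N).hom
      (incM_inj N) (piM_surj N) (exact_incM N) (freeM_flat N) hN
  | succ s =>
    rintro N ⟨K₀, G, f₀, φ, hG, hf₀, hφ, hex, hK₀s⟩
    classical
    have hφf₀ : ∀ w : ↑K₀, (φ).hom (f₀ w) = 0 := fun w => hex.apply_apply_eq_zero w
    -- pullback of piM N and φ
    let Xsub : Submodule R (↑(FreeM N) × ↑G) :=
      LinearMap.ker ((piM N).hom.comp (LinearMap.fst R _ _) -
        (φ).hom.comp (LinearMap.snd R _ _))
    have memX : ∀ p : ↑(FreeM N) × ↑G, p ∈ Xsub ↔ piM N p.1 = φ p.2 := by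
      intro p
      rw [LinearMap.mem_ker, LinearMap.sub_apply, sub_eq_zero]
      rfl
    let X : ModuleCat.{0} R := ModuleCat.of R ↥Xsub
    -- SES : 0 → KerM N → X → G → 0
    let j : ↑(KerM N) →ₗ[R] ↥Xsub :=
      LinearMap.codRestrict Xsub
        ((LinearMap.inl R ↑(FreeM N) ↑G).comp (LinearMap.ker (piM N).hom).subtype)
        (fun k => by
          rw [memX]
          show piM N k.1 = φ 0
          rw [map_zero]
          exact k.2)
    let pr₂ : ↥Xsub →ₗ[R] ↑G := (LinearMap.snd R _ _).comp Xsub.subtype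
    -- fdLE (s+1) X
    obtain ⟨K', F', f', g', hF', hf', hg', hex', hK's⟩ := fdLE_mono s hK₀s
    have hg'f' : ∀ w : ↑K', (g').hom (f' w) = 0 := fun w => hex'.apply_apply_eq_zero w
    -- a section of the first projection
    choose wG hwG using hφ
    let v : ↑N → ↥Xsub := fun b =>
      ⟨(Finsupp.single b 1, wG b), (memX _).mpr (by rw [piM_single, hwG])⟩
    let σ : (↑N →₀ R) →ₗ[R] ↥Xsub := Finsupp.linearCombination R v
    have hσ1 : ∀ u : (↑N →₀ R), (↑(σ u) : ↑(FreeM N) × ↑G).1 = u := by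
      have hcomp : ((LinearMap.fst R ↑(FreeM N) ↑G).comp (Xsub.subtype.comp σ))
          = (LinearMap.id : (↑N →₀ R) →ₗ[R] (↑N →₀ R)) := by
        refine Finsupp.lhom_ext fun b c => ?_
        show ((σ (Finsupp.single b c)) : ↑(FreeM N) × ↑G).1 = Finsupp.single b c
        rw [show σ (Finsupp.single b c) = c • v b from
          Finsupp.linearCombination_single R (v := v) c b]
        show c • (Finsupp.single b (1:R)) = Finsupp.single b c
        rw [Finsupp.smul_single, smul_eq_mul, mul_one]
      intro u
      exact DFunLike.congr_fun hcomp u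
    let inX : ↑K₀ →ₗ[R] ↥Xsub :=
      LinearMap.codRestrict Xsub ((LinearMap.inr R ↑(FreeM N) ↑G).comp (f₀).hom)
        (fun k₀ => by
          rw [memX]
          show piM N 0 = φ (f₀ k₀)
          rw [map_zero, hφf₀])
    let ψ : (↑F' × (↑N →₀ R)) →ₗ[R] ↥Xsub := LinearMap.coprod (inX.comp (g').hom) σ
    let f'' : ↑K' →ₗ[R] (↑F' × (↑N →₀ R)) := (LinearMap.inl R _ _).comp (f').hom
    have hinX2 : ∀ k₀, (↑(inX k₀) : ↑(FreeM N) × ↑G).2 = f₀ k₀ := fun _ => rfl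
    have hinX1 : ∀ k₀, (↑(inX k₀) : ↑(FreeM N) × ↑G).1 = 0 := fun _ => rfl
    have hψs : Function.Surjective ψ := by
      intro x
      have h1 : (↑(x - σ ((↑x : ↑(FreeM N) × ↑G).1)) : ↑(FreeM N) × ↑G).1 = 0 := by
        show (↑x : ↑(FreeM N) × ↑G).1 - (↑(σ ((↑x : ↑(FreeM N) × ↑G).1)) : ↑(FreeM N) × ↑G).1 = 0
        rw [hσ1]
        simp
      have h2 : φ ((↑(x - σ ((↑x : ↑(FreeM N) × ↑G).1)) : ↑(FreeM N) × ↑G).2) = 0 := by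
        have hm := (memX _).mp (x - σ ((↑x : ↑(FreeM N) × ↑G).1)).2
        rw [h1, map_zero] at hm
        exact hm.symm
      obtain ⟨k₀, hk₀⟩ := (hex _).mp h2
      obtain ⟨w', hw'⟩ := hg' k₀
      refine ⟨(w', (↑x : ↑(FreeM N) × ↑G).1), ?_⟩
      show inX (g' w') + σ ((↑x : ↑(FreeM N) × ↑G).1) = x
      rw [hw']
      have heq : inX k₀ = x - σ ((↑x : ↑(FreeM N) × ↑G).1) := by
        apply Subtype.ext
        refine Prod.ext ?_ ?_
        · rw [hinX1, h1]
        · rw [hinX2, hk₀]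
      rw [heq]
      exact sub_add_cancel x _
    have hf''i : Function.Injective f'' := by
      intro w₁ w₂ h
      exact hf' (congrArg Prod.fst h)
    have hexψ : Function.Exact f'' ψ := by
      rintro ⟨w, u⟩
      constructor
      · intro hp
        have h1 : u = 0 := by
          have h := congrArg (fun t : ↥Xsub => (↑t : ↑(FreeM N) × ↑G).1) hp
          have : (↑(inX (g' w)) : ↑(FreeM N) × ↑G).1 + (↑(σ u) : ↑(FreeM N) × ↑G).1 = 0 := h
          rwa [hinX1, hσ1, zero_add] at this
        have h2 : inX (g' w) = 0 := by
          have e : inX (g' w) = ψ (w, u) := by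
            show inX (g' w) = inX (g' w) + σ u
            rw [h1, map_zero, add_zero]
          rw [e, hp]
        have h3 : f₀ (g' w) = 0 :=
          congrArg (fun t : ↥Xsub => (↑t : ↑(FreeM N) × ↑G).2) h2
        have h4 : g' w = 0 := hf₀ (by rw [h3, map_zero])
        obtain ⟨k', hk'⟩ := (hex' w).mp h4
        refine ⟨k', ?_⟩
        refine Prod.ext ?_ ?_
        · exact hk'
        · exact h1.symm
      · rintro ⟨k', hk⟩
        rw [← hk]
        show inX (g' (f' k')) + σ 0 = 0
        rw [hg'f', map_zero, map_zero, add_zero]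
    have hprodflat : IsFlatMod R (↑F' × (↑N →₀ R)) := isFlatMod_prod hF' (isFlatMod_free _)
    have fdX : fdLE R (s+1) X :=
      ⟨K', ModuleCat.of R (↑F' × (↑N →₀ R)), ModuleCat.ofHom f'', ModuleCat.ofHom ψ,
        hprodflat, hf''i, hψs, hexψ, hK's⟩
    have hjinj : Function.Injective j := by
      intro k₁ k₂ h
      apply Subtype.ext
      exact congrArg (fun t : ↥Xsub => (↑t : ↑(FreeM N) × ↑G).1) h
    have hpr₂s : Function.Surjective pr₂ := by
      intro a
      obtain ⟨u, hu⟩ := piM_surj N (φ a)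
      exact ⟨⟨(u, a), (memX _).mpr hu⟩, rfl⟩
    have hexj : Function.Exact j pr₂ := by
      intro x
      constructor
      · intro hx
        have hx2 : (↑x : ↑(FreeM N) × ↑G).2 = 0 := hx
        have h2 : piM N ((↑x : ↑(FreeM N) × ↑G).1) = 0 := by
          have hm := (memX _).mp x.2
          rw [hx2, map_zero] at hm
          exact hm
        refine ⟨⟨(↑x : ↑(FreeM N) × ↑G).1, h2⟩, ?_⟩
        apply Subtype.ext
        refine Prod.ext rfl ?_
        show (0 : ↑G) = (↑x : ↑(FreeM N) × ↑G).2
        exact hx2.symm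
      · rintro ⟨k, hk⟩
        rw [← hk]
        rfl
    exact fdLE_step (s+1) (Y := X) (F := G) (ModuleCat.ofHom j) (ModuleCat.ofHom pr₂)
      hjinj hpr₂s hexj hG fdX
end KeyLemma
noncomputable section Homological
variable {R : Type} [Ring R]

def SYZ : ℕ → ModuleCat.{0} R → ModuleCat.{0} R
  | 0, N => N
  | (i+1), N => SYZ i (KerM N)

def incS : ∀ (i : ℕ) (N : ModuleCat.{0} R), SYZ (i+1) N ⟶ FreeM (SYZ i N)
  | 0, N => incM N
  | (i+1), N => incS i (KerM N)

lemma incS_inj : ∀ (i : ℕ) (N : ModuleCat.{0} R), Function.Injective (incS i N)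
  | 0, N => incM_inj N
  | (i+1), N => incS_inj i (KerM N)

lemma exact_incS : ∀ (i : ℕ) (N : ModuleCat.{0} R),
    Function.Exact (incS i N) (piM (SYZ i N))
  | 0, N => exact_incM N
  | (i+1), N => exact_incS i (KerM N)

lemma incS_pi (i : ℕ) (N : ModuleCat.{0} R) : incS i N ≫ piM (SYZ i N) = 0 := by
  ext x
  exact (exact_incS i N).apply_apply_eq_zero x

def CpxN (N : ModuleCat.{0} R) : ChainComplex (ModuleCat.{0} R) ℕ :=
  ChainComplex.of (fun i => FreeM (SYZ i N))
    (fun i => piM (SYZ (i+1) N) ≫ incS i N)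
    (fun i => by
      rw [CategoryTheory.Category.assoc, ← CategoryTheory.Category.assoc (incS (i+1) N),
        incS_pi (i+1) N]
      simp)

lemma CpxN_d (N : ModuleCat.{0} R) (i : ℕ) :
    (CpxN N).d (i+1) i = piM (SYZ (i+1) N) ≫ incS i N := by
  simp [CpxN]

lemma CpxN_d_shift (N : ModuleCat.{0} R) (i : ℕ) :
    (CpxN N).d (i+2) (i+1) = (CpxN (KerM N)).d (i+1) i := by
  rw [CpxN_d, CpxN_d]
  rfl

lemma CpxN_d_pi (N : ModuleCat.{0} R) : (CpxN N).d 1 0 ≫ piM N = 0 := by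
  rw [CpxN_d]
  ext x
  exact (exact_incS 0 N).apply_apply_eq_zero _

lemma freeM_projective (N : ModuleCat.{0} R) : Projective (FreeM N) :=
  ModuleCat.projective_of_free.{0,0,0} (Finsupp.basisSingleOne (R := R) (ι := ↑N))

def CpxNRes (N : ModuleCat.{0} R) : ProjectiveResolution N where
  complex := CpxN N
  projective n := freeM_projective _
  π := (ChainComplex.toSingle₀Equiv _ _).symm ⟨piM N, by
    rw [CpxN_d]
    ext x
    exact (exact_incS 0 N).apply_apply_eq_zero _⟩
  quasiIso := ⟨fun n => by
    cases n with
    | zero =>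
      rw [ChainComplex.quasiIsoAt₀_iff, ShortComplex.quasiIso_iff_of_zeros']
      · dsimp [HomologicalComplex.shortComplexFunctor']
        refine (ShortComplex.exact_and_epi_g_iff_of_iso
          (S₂ := ShortComplex.mk ((CpxN N).d 1 0) (piM N) (CpxN_d_pi N)) ?_).2 ⟨?_, ?_⟩
        · exact ShortComplex.isoMk (Iso.refl _) (Iso.refl _) (Iso.refl _) (by simp) (by simp; rfl)
        · rw [ShortComplex.moduleCat_exact_iff]
          intro x hx
          obtain ⟨k, hk⟩ := (exact_incS 0 N x).mp hx
          obtain ⟨y, hy⟩ := piM_surj (SYZ 1 N) k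
          refine ⟨y, ?_⟩
          show (CpxN N).d 1 0 y = x
          rw [CpxN_d]
          show incS 0 N (piM (SYZ 1 N) y) = x
          rw [hy, hk]
        · show Epi (piM N)
          rw [ModuleCat.epi_iff_surjective]
          exact piM_surj N
      all_goals rfl
    | succ n =>
      rw [quasiIsoAt_iff_exactAt']
      · rw [HomologicalComplex.exactAt_iff' _ (n+2) (n+1) n (by simp) (by simp)]
        rw [ShortComplex.moduleCat_exact_iff]
        intro x hx
        have hx' : incS n N ((piM (SYZ (n+1) N)) x) = 0 := by
          have : (CpxN N).d (n+1) n x = 0 := hx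
          rwa [CpxN_d] at this
        have h0 : (piM (SYZ (n+1) N)) x = 0 := by
          have := incS_inj n N (a₁ := piM (SYZ (n+1) N) x) (a₂ := 0)
          rw [map_zero] at this
          exact this hx'
        obtain ⟨k, hk⟩ := (exact_incS (n+1) N x).mp h0
        obtain ⟨y, hy⟩ := piM_surj (SYZ (n+2) N) k
        refine ⟨y, ?_⟩
        show (CpxN N).d (n+2) (n+1) y = x
        rw [CpxN_d]
        show incS (n+1) N (piM (SYZ (n+2) N) y) = x
        rw [hy, hk]
      · apply ChainComplex.exactAt_succ_single_obj⟩

end Homological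

noncomputable section MainThm
variable {R : Type} [Ring R]

def HomCpx (N W : ModuleCat.{0} R) : CochainComplex (ModuleCat ℤ) ℕ :=
  (CpxN N).linearYonedaObj ℤ W

def shiftIso (N W : ModuleCat.{0} R) (m : ℕ) :
    (HomCpx N W).homology (m+2) ≅ (HomCpx (KerM N) W).homology (m+1) := by
  refine (HomologicalComplex.homologyIsoSc' _ (m+1) (m+2) (m+3) (by simp) (by simp)) ≪≫
    ShortComplex.homologyMapIso ?_ ≪≫
    (HomologicalComplex.homologyIsoSc' _ m (m+1) (m+2) (by simp) (by simp)).symm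
  refine ShortComplex.isoMk (Iso.refl _) (Iso.refl _) (Iso.refl _) ?_ ?_
  · dsimp [HomCpx]
    erw [CategoryTheory.Category.id_comp, CategoryTheory.Category.comp_id]
    exact congrArg (fun d : (CpxN N).X (m+2) ⟶ (CpxN N).X (m+1) =>
      ModuleCat.ofHom (Linear.leftComp ℤ W d)) (CpxN_d_shift N m).symm
  · dsimp [HomCpx]
    erw [CategoryTheory.Category.id_comp, CategoryTheory.Category.comp_id]
    exact congrArg (fun d : (CpxN N).X (m+3) ⟶ (CpxN N).X (m+2) =>
      ModuleCat.ofHom (Linear.leftComp ℤ W d)) (CpxN_d_shift N (m+1)).symm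

theorem key2 {n : ℕ} {W : ModuleCat.{0} R} (hW : LnInj R n W) :
    ∀ (m : ℕ) (M : ModuleCat.{0} R), fdLE R n M →
      Subsingleton ↑((HomCpx M W).homology (m+1)) := by
  intro m
  induction m with
  | zero =>
    intro M hM
    haveI h1 : Subsingleton (((Ext ℤ (ModuleCat.{0} R) 1).obj (Opposite.op M)).obj W) := hW M hM
    exact Equiv.subsingleton ((forget _).mapIso ((CpxNRes M).isoExt 1 W)).toEquiv.symm
  | succ m ih =>
    intro M hM
    haveI := ih (KerM M) (fdLE_ker n M hM)
    exact Equiv.subsingleton ((forget _).mapIso (shiftIso M W m)).toEquiv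

end MainThm

end Aux

/-- If `W` is `L_n`-injective, then `Ext^k_R(M, W) = 0` for every `M` of flat
dimension at most `n` and every `k ≥ 1`. -/
theorem stmt0 (n : ℕ) (W : ModuleCat.{0} R) (hW : LnInj R n W) :
    ∀ M : ModuleCat.{0} R, fdLE R n M → ∀ k : ℕ, 1 ≤ k → extVanish R k M W := by
  intro M hM k hk
  obtain ⟨m, rfl⟩ : ∃ m, k = m + 1 := ⟨k - 1, (Nat.succ_pred_eq_of_pos hk).symm⟩
  show Subsingleton (((Ext ℤ (ModuleCat.{0} R) (m+1)).obj (Opposite.op M)).obj W)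
  exact @Equiv.subsingleton _ _
    ((forget _).mapIso ((CpxNRes M).isoExt (m+1) W)).toEquiv (key2 hW m M hM)
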